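/- Let z_1,…,z_N ∈ ℝ^k be nonzero vectors whose conic hull equals ℝ^k, and let ρ : ℝ^k → ℝ be continuous. Define G(λ) = ∫_{K(λ)} ρ(x) dx where K(λ) = {x : ⟨x, z_i⟩ ≤ λ_i ∀i}. Then G is continuous on ℝ^N (in fact locally Lipschitz). -/

import Mathlib

open MeasureTheory

lemma slab_vol_aux {m : ℕ} (z : EuclideanSpace ℝ (Fin (m+1))) (hz : z ≠ 0) {R : ℝ}
    (hR : 0 ≤ R) (a b : ℝ) :
    volume {x : EuclideanSpace ℝ (Fin (m+1)) |
        (a < (inner ℝ x z : ℝ) ∧ (inner ℝ x z : ℝ) ≤ b) ∧ ‖x‖ ≤ R}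
      ≤ ENNReal.ofReal ((2*R)^m / ‖z‖) * ENNReal.ofReal (b - a) := by
  rcases lt_or_ge b a with hab | hab
  · have : {x : EuclideanSpace ℝ (Fin (m+1)) |
        (a < (inner ℝ x z : ℝ) ∧ (inner ℝ x z : ℝ) ≤ b) ∧ ‖x‖ ≤ R} = ∅ := by
      ext x
      simp only [Set.mem_setOf_eq, Set.mem_empty_iff_false, iff_false]
      rintro ⟨⟨h1, h2⟩, -⟩
      linarith
    rw [this, measure_empty]
    exact zero_le
  have hzpos : (0:ℝ) < ‖z‖ := norm_pos_iff.2 hz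
  set u : EuclideanSpace ℝ (Fin (m+1)) := ‖z‖⁻¹ • z with hu_def
  have hu : ‖u‖ = 1 := by
    rw [hu_def, norm_smul, norm_inv, norm_norm, inv_mul_cancel₀ hzpos.ne']
  have horth : Orthonormal ℝ (({0} : Set (Fin (m+1))).restrict (fun _ => u)) := by
    constructor
    · intro i; exact hu
    · intro i j hij
      exact absurd (Subsingleton.elim i j) hij
  have hcard : Module.finrank ℝ (EuclideanSpace ℝ (Fin (m+1))) = Fintype.card (Fin (m+1)) := by
    simp
  obtain ⟨B, hB⟩ := horth.exists_orthonormalBasis_extension_of_card_eq hcard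
  have hB0 : B 0 = u := hB 0 rfl
  set I : Fin (m+1) → Set ℝ := fun j =>
    if j = 0 then Set.Ioc (a/‖z‖) (b/‖z‖) else Set.Icc (-R) R with hI_def
  have hImeas : ∀ j, MeasurableSet (I j) := by
    intro j
    rcases eq_or_ne j 0 with rfl | hj
    · simp only [hI_def, if_pos rfl]; exact measurableSet_Ioc
    · simp only [hI_def, if_neg hj]; exact measurableSet_Icc
  have hsub : {x : EuclideanSpace ℝ (Fin (m+1)) |
        (a < (inner ℝ x z : ℝ) ∧ (inner ℝ x z : ℝ) ≤ b) ∧ ‖x‖ ≤ R}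
      ⊆ B.repr ⁻¹' ((MeasurableEquiv.toLp 2 (Fin (m+1) → ℝ)).symm ⁻¹' (Set.univ.pi I)) := by
    rintro x ⟨⟨h1, h2⟩, h3⟩
    intro j _
    rcases eq_or_ne j 0 with rfl | hj
    · have hrepr : B.repr x 0 = (inner ℝ x z : ℝ) / ‖z‖ := by
        rw [B.repr_apply_apply, hB0, hu_def, real_inner_comm, real_inner_smul_right,
          inv_mul_eq_div]
      simp only [hI_def, if_pos rfl, Set.mem_Ioc, hrepr]
      rw [show (MeasurableEquiv.toLp 2 (Fin (m + 1) → ℝ)).symm (B.repr x) 0 = B.repr x 0 from rfl,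
        hrepr]
      exact ⟨(div_lt_div_iff_of_pos_right hzpos).2 h1, (div_le_div_iff_of_pos_right hzpos).2 h2⟩
    · simp only [hI_def, if_neg hj, Set.mem_Icc, ← abs_le]
      calc |B.repr x j| ≤ ‖B.repr x‖ := by
            rw [EuclideanSpace.norm_eq, ← Real.sqrt_sq_eq_abs]
            apply Real.sqrt_le_sqrt
            have := Finset.single_le_sum (f := fun i => ‖B.repr x i‖^2)
              (fun i _ => sq_nonneg _) (Finset.mem_univ j)
            simpa [Real.norm_eq_abs, sq_abs] using this
        _ = ‖x‖ := B.repr.norm_map x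
        _ ≤ R := h3
  calc volume {x : EuclideanSpace ℝ (Fin (m+1)) |
        (a < (inner ℝ x z : ℝ) ∧ (inner ℝ x z : ℝ) ≤ b) ∧ ‖x‖ ≤ R}
      ≤ volume (B.repr ⁻¹' ((MeasurableEquiv.toLp 2 (Fin (m+1) → ℝ)).symm ⁻¹' (Set.univ.pi I))) := measure_mono hsub
    _ = ∏ j, volume (I j) := by
        rw [B.measurePreserving_repr.measure_preimage
          ((MeasurableSet.univ_pi hImeas).preimage (MeasurableEquiv.measurable _)).nullMeasurableSet]
        show volume ((MeasurableEquiv.toLp 2 (Fin (m+1) → ℝ)).symm ⁻¹' (Set.univ.pi I)) = _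
        rw [(EuclideanSpace.volume_preserving_symm_measurableEquiv_toLp (Fin (m+1))).measure_preimage
          (MeasurableSet.univ_pi hImeas).nullMeasurableSet]
        exact volume_pi_pi I
    _ ≤ ENNReal.ofReal ((2*R)^m / ‖z‖) * ENNReal.ofReal (b - a) := by
        rw [Fin.prod_univ_succ]
        have h0 : volume (I 0) = ENNReal.ofReal ((b - a) / ‖z‖) := by
          simp only [hI_def, if_pos rfl, Real.volume_Ioc, div_sub_div_same]
        have hs : ∀ j : Fin m, volume (I j.succ) = ENNReal.ofReal (2*R) := by
          intro j
          simp only [hI_def, if_neg (Fin.succ_ne_zero j), Real.volume_Icc]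
          ring_nf
        rw [h0]
        simp only [hs]
        rw [Finset.prod_const, Finset.card_univ, Fintype.card_fin,
          ← ENNReal.ofReal_pow (by linarith : (0:ℝ) ≤ 2*R),
          ← ENNReal.ofReal_mul (div_nonneg (by linarith) (norm_nonneg z)),
          ← ENNReal.ofReal_mul (div_nonneg (pow_nonneg (by linarith) m) (norm_nonneg z))]
        apply ENNReal.ofReal_le_ofReal
        have heq : (b-a)/‖z‖ * (2*R)^m = (2*R)^m/‖z‖ * (b-a) := by ring
        rw [heq]

open Metric in
/-- with nonzero vectors `z_i` whose conic hull is `ℝ^k` and a continuous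
density `ρ`, the function `G(λ) = ∫_{K(λ)} ρ` is continuous (in fact locally Lipschitz). -/
theorem polytope_integral_continuous {k N : ℕ}
    (z : Fin N → EuclideanSpace ℝ (Fin k)) (hz : ∀ i, z i ≠ 0)
    (hcone : ∀ x : EuclideanSpace ℝ (Fin k),
      ∃ c : Fin N → ℝ, (∀ i, 0 ≤ c i) ∧ x = ∑ i, c i • z i)
    (ρ : EuclideanSpace ℝ (Fin k) → ℝ) (hρ : Continuous ρ) :
    Continuous (fun lam : Fin N → ℝ =>
        ∫ x in {x : EuclideanSpace ℝ (Fin k) | ∀ i, (inner ℝ x (z i) : ℝ) ≤ lam i}, ρ x) ∧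
    LocallyLipschitz (fun lam : Fin N → ℝ =>
        ∫ x in {x : EuclideanSpace ℝ (Fin k) | ∀ i, (inner ℝ x (z i) : ℝ) ≤ lam i}, ρ x) := by
  suffices h : LocallyLipschitz (fun lam : Fin N → ℝ =>
      ∫ x in {x : EuclideanSpace ℝ (Fin k) | ∀ i, (inner ℝ x (z i) : ℝ) ≤ lam i}, ρ x) from
    ⟨h.continuous, h⟩
  rcases Nat.eq_zero_or_pos N with rfl | hN
  · -- trivial case `N = 0`: the set is always `univ`, so the function is constant
    have hset : ∀ lam : Fin 0 → ℝ,
        {x : EuclideanSpace ℝ (Fin k) | ∀ i, (inner ℝ x (z i) : ℝ) ≤ lam i} = Set.univ := by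
      intro lam; ext x
      simp only [Set.mem_setOf_eq, Set.mem_univ, iff_true]
      exact fun i => i.elim0
    have : (fun lam : Fin 0 → ℝ =>
        ∫ x in {x : EuclideanSpace ℝ (Fin k) | ∀ i, (inner ℝ x (z i) : ℝ) ≤ lam i}, ρ x)
        = fun _ => ∫ x in (Set.univ : Set (EuclideanSpace ℝ (Fin k))), ρ x := by
      funext lam; rw [hset lam]
    rw [this]
    exact (LipschitzWith.const _).locallyLipschitz
  -- now `N ≥ 1`; first rule out `k = 0`
  cases k with
  | zero =>
      haveI : Subsingleton (EuclideanSpace ℝ (Fin 0)) :=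
        ⟨fun a b => by ext i; exact i.elim0⟩
      exact absurd (Subsingleton.elim (z ⟨0, hN⟩) 0) (hz ⟨0, hN⟩)
  | succ m =>
  haveI : Nonempty (Fin N) := ⟨⟨0, hN⟩⟩
  have hne : (Finset.univ : Finset (Fin N)).Nonempty := Finset.univ_nonempty
  -- the separation constant ε
  have hsep : ∃ ε > (0:ℝ), ∀ x : EuclideanSpace ℝ (Fin (m+1)),
      ∃ i, ε * ‖x‖ ≤ (inner ℝ x (z i) : ℝ) := by
    set g : EuclideanSpace ℝ (Fin (m+1)) → ℝ :=
      fun x => Finset.univ.sup' hne (fun i => (inner ℝ x (z i) : ℝ)) with hg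
    have hgc : Continuous g := by
      apply continuous_iff_continuousAt.2
      intro x
      exact ContinuousAt.finset_sup'_apply hne
        (fun i _ => (continuous_id.inner continuous_const).continuousAt)
    obtain ⟨u₀, hu₀mem, hu₀min⟩ :=
      (isCompact_sphere (0 : EuclideanSpace ℝ (Fin (m+1))) 1).exists_isMinOn
        (NormedSpace.sphere_nonempty.2 zero_le_one) hgc.continuousOn
    have hu₀ : ‖u₀‖ = 1 := mem_sphere_zero_iff_norm.1 hu₀mem
    have hpos : 0 < g u₀ := by
      obtain ⟨c, hc, hcsum⟩ := hcone u₀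
      have hone : (1:ℝ) = ∑ i, c i * (inner ℝ u₀ (z i) : ℝ) := by
        have h1 : (inner ℝ u₀ u₀ : ℝ) = 1 := by
          rw [real_inner_self_eq_norm_sq, hu₀]; norm_num
        calc (1:ℝ) = (inner ℝ u₀ u₀ : ℝ) := h1.symm
          _ = (inner ℝ u₀ (∑ i, c i • z i) : ℝ) := by rw [← hcsum]
          _ = ∑ i, c i * (inner ℝ u₀ (z i) : ℝ) := by
              rw [inner_sum]
              exact Finset.sum_congr rfl fun i _ => real_inner_smul_right _ _ _
      by_contra hle
      push_neg at hle
      have hall : ∀ i, (inner ℝ u₀ (z i) : ℝ) ≤ 0 :=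
        fun i => le_trans (Finset.le_sup' (fun i => (inner ℝ u₀ (z i) : ℝ))
          (Finset.mem_univ i)) hle
      have : ∑ i, c i * (inner ℝ u₀ (z i) : ℝ) ≤ 0 :=
        Finset.sum_nonpos fun i _ => mul_nonpos_of_nonneg_of_nonpos (hc i) (hall i)
      linarith
    refine ⟨g u₀, hpos, ?_⟩
    intro x
    rcases eq_or_ne x 0 with rfl | hx
    · exact ⟨⟨0, hN⟩, by simp⟩
    · have hxn : 0 < ‖x‖ := norm_pos_iff.2 hx
      have humem : (‖x‖⁻¹ • x) ∈ sphere (0 : EuclideanSpace ℝ (Fin (m+1))) 1 := by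
        rw [mem_sphere_zero_iff_norm, norm_smul, norm_inv, norm_norm,
          inv_mul_cancel₀ hxn.ne']
      have hmin := hu₀min humem
      obtain ⟨i, -, hi⟩ := Finset.exists_mem_eq_sup' hne
        (fun i => (inner ℝ (‖x‖⁻¹ • x) (z i) : ℝ))
      refine ⟨i, ?_⟩
      have h2 : g u₀ ≤ (inner ℝ (‖x‖⁻¹ • x) (z i) : ℝ) := by
        rw [← hi]; exact hmin
      have h3 : (inner ℝ (‖x‖⁻¹ • x) (z i) : ℝ) = ‖x‖⁻¹ * (inner ℝ x (z i) : ℝ) :=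
        real_inner_smul_left _ _ _
      rw [h3] at h2
      calc g u₀ * ‖x‖ ≤ (‖x‖⁻¹ * (inner ℝ x (z i) : ℝ)) * ‖x‖ :=
            mul_le_mul_of_nonneg_right h2 hxn.le
        _ = (inner ℝ x (z i) : ℝ) := by field_simp
  obtain ⟨ε, hε, hsep⟩ := hsep
  -- the locally Lipschitz statement
  intro lam₀
  set M : ℝ := ‖lam₀‖ + 1 with hM_def
  have hM : 0 < M := by positivity
  set R : ℝ := M / ε with hR_def
  have hR : 0 < R := div_pos hM hε
  set c : Fin N → ℝ := fun i => (2*R)^m / ‖z i‖ with hc_def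
  have hc0 : ∀ i, 0 ≤ c i :=
    fun i => div_nonneg (pow_nonneg (by linarith) m) (norm_nonneg _)
  obtain ⟨C, hC⟩ := (isCompact_closedBall (0 : EuclideanSpace ℝ (Fin (m+1))) R
    ).exists_bound_of_continuousOn hρ.continuousOn
  set C' : ℝ := max C 0 with hC'_def
  have hC'0 : 0 ≤ C' := le_max_right _ _
  set Kset : (Fin N → ℝ) → Set (EuclideanSpace ℝ (Fin (m+1))) :=
    fun ν => {x | ∀ i, (inner ℝ x (z i) : ℝ) ≤ ν i} with hKset
  have hclosed : ∀ ν, IsClosed (Kset ν) := by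
    intro ν
    have : Kset ν = ⋂ i, {x : EuclideanSpace ℝ (Fin (m+1)) | (inner ℝ x (z i) : ℝ) ≤ ν i} := by
      ext x; simp [hKset, Set.mem_iInter]
    rw [this]
    exact isClosed_iInter fun i =>
      isClosed_le (continuous_id.inner continuous_const) continuous_const
  have hmeas : ∀ ν, MeasurableSet (Kset ν) := fun ν => (hclosed ν).measurableSet
  have hbound : ∀ ν ∈ ball lam₀ 1, Kset ν ⊆ closedBall 0 R := by
    intro ν hν x hx
    obtain ⟨i, hi⟩ := hsep x
    have h1 : (inner ℝ x (z i) : ℝ) ≤ ν i := hx i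
    have h2 : ν i ≤ M := by
      have hd : dist (ν i) (lam₀ i) ≤ dist ν lam₀ := dist_le_pi_dist ν lam₀ i
      have hd2 : ν i - lam₀ i ≤ dist (ν i) (lam₀ i) := by
        rw [Real.dist_eq]; exact le_abs_self _
      have hd3 : lam₀ i ≤ ‖lam₀‖ := (le_abs_self _).trans (norm_le_pi_norm lam₀ i)
      have hd4 : dist ν lam₀ < 1 := mem_ball.1 hν
      rw [hM_def]; linarith
    rw [mem_closedBall_zero_iff, hR_def, le_div_iff₀ hε, mul_comm]
    linarith
  have hcompact : ∀ ν ∈ ball lam₀ 1, IsCompact (Kset ν) := by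
    intro ν hν
    exact (isCompact_closedBall _ _).of_isClosed_subset (hclosed ν) (hbound ν hν)
  have hint : ∀ ν ∈ ball lam₀ 1, IntegrableOn ρ (Kset ν) :=
    fun ν hν => hρ.continuousOn.integrableOn_compact (hcompact ν hν)
  -- volume of the difference set
  have hvol : ∀ ν₁ ∈ ball lam₀ 1, ∀ ν₂ ∈ ball lam₀ 1,
      volume (Kset ν₁ \ Kset ν₂) ≤ ENNReal.ofReal ((∑ i, c i) * dist ν₁ ν₂) := by
    intro ν₁ hν₁ ν₂ hν₂
    have hsub : Kset ν₁ \ Kset ν₂ ⊆ ⋃ i, {x : EuclideanSpace ℝ (Fin (m+1)) |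
        (ν₂ i < (inner ℝ x (z i) : ℝ) ∧ (inner ℝ x (z i) : ℝ) ≤ ν₁ i) ∧ ‖x‖ ≤ R} := by
      rintro x ⟨hx1, hx2⟩
      simp only [hKset, Set.mem_setOf_eq, not_forall, not_le] at hx2
      obtain ⟨i, hi⟩ := hx2
      refine Set.mem_iUnion.2 ⟨i, ⟨⟨hi, hx1 i⟩, ?_⟩⟩
      exact mem_closedBall_zero_iff.1 (hbound ν₁ hν₁ hx1)
    calc volume (Kset ν₁ \ Kset ν₂)
        ≤ ∑ i, volume {x : EuclideanSpace ℝ (Fin (m+1)) |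
            (ν₂ i < (inner ℝ x (z i) : ℝ) ∧ (inner ℝ x (z i) : ℝ) ≤ ν₁ i) ∧ ‖x‖ ≤ R} :=
          (measure_mono hsub).trans (measure_iUnion_fintype_le _ _)
      _ ≤ ∑ i, ENNReal.ofReal (c i) * ENNReal.ofReal (dist ν₁ ν₂) := by
          apply Finset.sum_le_sum
          intro i _
          refine (slab_vol_aux (z i) (hz i) hR.le (ν₂ i) (ν₁ i)).trans ?_
          refine mul_le_mul' le_rfl (ENNReal.ofReal_le_ofReal ?_)
          calc ν₁ i - ν₂ i ≤ |ν₁ i - ν₂ i| := le_abs_self _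
            _ = dist (ν₁ i) (ν₂ i) := (Real.dist_eq _ _).symm
            _ ≤ dist ν₁ ν₂ := dist_le_pi_dist ν₁ ν₂ i
      _ = ENNReal.ofReal ((∑ i, c i) * dist ν₁ ν₂) := by
          rw [← Finset.sum_mul, ← ENNReal.ofReal_sum_of_nonneg fun i _ => hc0 i,
            ← ENNReal.ofReal_mul (Finset.sum_nonneg fun i _ => hc0 i)]
  -- bound on the boundary integrals
  have hIB : ∀ ν₁ ∈ ball lam₀ 1, ∀ ν₂ ∈ ball lam₀ 1,
      ‖∫ x in Kset ν₁ \ Kset ν₂, ρ x‖ ≤ C' * ((∑ i, c i) * dist ν₁ ν₂) := by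
    intro ν₁ hν₁ ν₂ hν₂
    have hfin : volume (Kset ν₁ \ Kset ν₂) < ⊤ :=
      lt_of_le_of_lt (measure_mono ((Set.diff_subset).trans (hbound ν₁ hν₁)))
        measure_closedBall_lt_top
    have hbd : ∀ x ∈ Kset ν₁ \ Kset ν₂, ‖ρ x‖ ≤ C' :=
      fun x hx => (hC x (hbound ν₁ hν₁ hx.1)).trans (le_max_left _ _)
    calc ‖∫ x in Kset ν₁ \ Kset ν₂, ρ x‖
        ≤ C' * (volume (Kset ν₁ \ Kset ν₂)).toReal :=
          norm_setIntegral_le_of_norm_le_const hfin hbd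
      _ ≤ C' * ((∑ i, c i) * dist ν₁ ν₂) := by
          apply mul_le_mul_of_nonneg_left _ hC'0
          exact ENNReal.toReal_le_of_le_ofReal
            (mul_nonneg (Finset.sum_nonneg fun i _ => hc0 i) dist_nonneg)
            (hvol ν₁ hν₁ ν₂ hν₂)
  refine ⟨(2 * C' * ∑ i, c i).toNNReal, ball lam₀ 1, ball_mem_nhds _ one_pos,
    LipschitzOnWith.of_dist_le_mul ?_⟩
  intro lam hlam mu hmu
  have hKnn : (0:ℝ) ≤ 2 * C' * ∑ i, c i :=
    mul_nonneg (by linarith) (Finset.sum_nonneg fun i _ => hc0 i)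
  rw [Real.coe_toNNReal _ hKnn]
  have h1 := integral_inter_add_diff (μ := volume) (f := ρ) (s := Kset lam)
    (t := Kset mu) (hmeas mu) (hint lam hlam)
  have h2 := integral_inter_add_diff (μ := volume) (f := ρ) (s := Kset mu)
    (t := Kset lam) (hmeas lam) (hint mu hmu)
  rw [Set.inter_comm] at h2
  have hB1 := hIB lam hlam mu hmu
  have hB2 := hIB mu hmu lam hlam
  have hd : dist lam mu = dist mu lam := dist_comm _ _
  rw [Real.dist_eq]
  have habs : |(∫ x in Kset lam, ρ x) - ∫ x in Kset mu, ρ x|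
      ≤ ‖∫ x in Kset lam \ Kset mu, ρ x‖ + ‖∫ x in Kset mu \ Kset lam, ρ x‖ := by
    have : (∫ x in Kset lam, ρ x) - ∫ x in Kset mu, ρ x
        = (∫ x in Kset lam \ Kset mu, ρ x) - ∫ x in Kset mu \ Kset lam, ρ x := by
      linarith
    rw [this]
    exact (abs_sub _ _).trans (by rw [Real.norm_eq_abs, Real.norm_eq_abs])
  calc |(∫ x in Kset lam, ρ x) - ∫ x in Kset mu, ρ x|
      ≤ ‖∫ x in Kset lam \ Kset mu, ρ x‖ + ‖∫ x in Kset mu \ Kset lam, ρ x‖ := habs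
    _ ≤ C' * ((∑ i, c i) * dist lam mu) + C' * ((∑ i, c i) * dist mu lam) := by
        exact add_le_add hB1 hB2
    _ = (2 * C' * ∑ i, c i) * dist lam mu := by rw [← hd]; ring
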